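/- Let w be a workload fluid model solution with w(0) ≤ d_max. Then w(s) < d_max for every s > 0, and the map s ↦ w(s) + s is continuous and strictly increasing on [0,∞). -/

import Mathlib

open MeasureTheory Set Filter Topology
open scoped ENNReal

noncomputable section

namespace OverloadedFIFO

/-- The complement `G(x) = Γ((x, ∞))` of the cumulative distribution function of `Γ`. -/
def Gk (Γ : MeasureTheory.Measure ℝ) (x : ℝ) : ℝ := (Γ (Set.Ioi x)).toReal

/-- Model data: `K` job classes with arrival rates `lam`, service rates `mu`, and
deadline (patience) distributions `Γ`, in the overloaded regime `ρ > 1`.  Each `Γ k` is a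
Borel probability measure on `[0,∞)` (no mass on negatives), with continuous c.d.f.
(no atoms, in particular `Γ k {0} = 0`) and finite mean. -/
structure Data (K : ℕ) where
  lam : Fin K → ℝ
  mu : Fin K → ℝ
  Γ : Fin K → MeasureTheory.Measure ℝ
  lam_pos : ∀ k, 0 < lam k
  mu_pos : ∀ k, 0 < mu k
  Γ_prob : ∀ k, MeasureTheory.IsProbabilityMeasure (Γ k)
  Γ_null_neg : ∀ k, Γ k (Set.Iio 0) = 0
  Γ_noAtom : ∀ k, ∀ x : ℝ, Γ k {x} = 0
  Γ_finite_mean : ∀ k, MeasureTheory.Integrable id (Γ k)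
  rho_gt_one : 1 < ∑ k, lam k / mu k

instance {K : ℕ} (D : Data K) (k : Fin K) : IsProbabilityMeasure (D.Γ k) := D.Γ_prob k

/-- `ρ_k = λ_k / μ_k`. -/
def Data.rho {K : ℕ} (D : Data K) (k : Fin K) : ℝ := D.lam k / D.mu k

/-- `ρ = Σ_k ρ_k`. -/
def Data.rhoTot {K : ℕ} (D : Data K) : ℝ := ∑ k, D.rho k

/-- A workload fluid model solution: a nonnegative function `w` on `[0,∞)` satisfying
`w(t) = w(0) + Σ_k ρ_k ∫_0^t G_k(w(s)) ds − t` for all `t ≥ 0`. -/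
def IsWorkloadSol {K : ℕ} (D : Data K) (w : ℝ → ℝ) : Prop :=
  (∀ t : ℝ, 0 ≤ t → 0 ≤ w t) ∧
  (∀ k : Fin K, ∀ t : ℝ, 0 ≤ t →
    IntervalIntegrable (fun s => Gk (D.Γ k) (w s)) volume 0 t) ∧
  (∀ t : ℝ, 0 ≤ t →
    w t = w 0 + (∑ k, D.rho k * ∫ s in (0:ℝ)..t, Gk (D.Γ k) (w s)) - t)

/-- `w_l = sup {u ≥ 0 : Σ_k ρ_k G_k(u) > 1}`. -/
def wl {K : ℕ} (D : Data K) : ℝ :=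
  sSup {u : ℝ | 0 ≤ u ∧ 1 < ∑ k, D.rho k * Gk (D.Γ k) u}

/-- `w_u = sup {u ≥ 0 : Σ_k ρ_k G_k(u) ≥ 1}`. -/
def wu {K : ℕ} (D : Data K) : ℝ :=
  sSup {u : ℝ | 0 ≤ u ∧ 1 ≤ ∑ k, D.rho k * Gk (D.Γ k) u}

/-- `d_max = max_k sup {x ≥ 0 : G_k(x) > 0} ∈ (0,∞]`, as an extended nonnegative real. -/
def dmax {K : ℕ} (D : Data K) : ℝ≥0∞ :=
  ⨆ k, sSup (ENNReal.ofReal '' {x : ℝ | 0 ≤ x ∧ 0 < Gk (D.Γ k) x})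

/-- `τ(t) = inf {s ∈ [0,t] : w(s) + s ≥ t}`. -/
def tauF (w : ℝ → ℝ) (t : ℝ) : ℝ := sInf {s : ℝ | 0 ≤ s ∧ s ≤ t ∧ t ≤ w s + s}

/-- The nonnegative quadrant `[0,∞)²`. -/
def Q : Set (ℝ × ℝ) := {p | 0 ≤ p.1 ∧ 0 ≤ p.2}

/-- The shift `B_x = {y ∈ [0,∞)² : y − x ∈ B}` of a set `B ⊆ [0,∞)²`. -/
def shift (B : Set (ℝ × ℝ)) (x : ℝ × ℝ) : Set (ℝ × ℝ) :=
  {y | y ∈ Q ∧ (y.1 - x.1, y.2 - x.2) ∈ B}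

/-- Diagonal shift `B_t = B_{(t,t)}`. -/
def shiftd (B : Set (ℝ × ℝ)) (t : ℝ) : Set (ℝ × ℝ) := shift B (t, t)

/-- The set `C = ([0,∞)×{0}) ∪ ({0}×[0,∞))`. -/
def Cset : Set (ℝ × ℝ) := {p | (0 ≤ p.1 ∧ p.2 = 0) ∨ (p.1 = 0 ∧ 0 ≤ p.2)}

/-- The `κ`-enlargement `B^κ = {x ∈ [0,∞)² : inf_{y ∈ B} ‖x−y‖ < κ}` (Euclidean norm). -/
def enlarge (B : Set (ℝ × ℝ)) (κ : ℝ) : Set (ℝ × ℝ) :=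
  {x | x ∈ Q ∧ ∃ y ∈ B, Real.sqrt ((x.1 - y.1) ^ 2 + (x.2 - y.2) ^ 2) < κ}

/-- `w_ϑ = sup {x ≥ 0 : ϑ_+([x,∞)×[0,∞)) > 0}` for a `K`-tuple `ϑ` of measures on `[0,∞)²`. -/
def wMeas {K : ℕ} (ϑ : Fin K → MeasureTheory.Measure (ℝ × ℝ)) : ℝ :=
  sSup {x : ℝ | 0 ≤ x ∧ 0 < ∑ k, ϑ k (Set.Ici x ×ˢ Set.Ici (0:ℝ))}

/-- Membership in the set `I` of admissible initial measures: each `ϑ k` is a finite Borel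
measure on `[0,∞)²`; (I.1) the superposition charges no corner set `C_x`, `x ∈ [0,∞)²`;
(I.2) `w_ϑ < ∞`; (I.3) `max_k G_k(w_ϑ − ε) > 0` for every `ε > 0`. -/
def MemI {K : ℕ} (D : Data K) (ϑ : Fin K → MeasureTheory.Measure (ℝ × ℝ)) : Prop :=
  (∀ k, IsFiniteMeasure (ϑ k)) ∧
  (∀ k, ϑ k Qᶜ = 0) ∧
  (∀ x ∈ Q, (∑ k, ϑ k (shift Cset x)) = 0) ∧
  BddAbove {x : ℝ | 0 ≤ x ∧ 0 < ∑ k, ϑ k (Set.Ici x ×ˢ Set.Ici (0:ℝ))} ∧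
  (∀ ε : ℝ, 0 < ε → ∃ k, 0 < Gk (D.Γ k) (wMeas ϑ - ε))

/-- `δ⁺_w`: the Dirac measure at `w` if `w > 0`, and the zero measure otherwise. -/
def deltaPlus (w : ℝ) : MeasureTheory.Measure ℝ :=
  if 0 < w then MeasureTheory.Measure.dirac w else 0

instance (w : ℝ) : SFinite (deltaPlus w) := by
  unfold deltaPlus; split_ifs <;> infer_instance

/-- `(δ⁺_w × Γ)(B)`, as a real number. -/
def kern (Γ : MeasureTheory.Measure ℝ) (w : ℝ) (B : Set (ℝ × ℝ)) : ℝ :=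
  (((deltaPlus w).prod Γ) B).toReal

/-- A (measure-valued) fluid model solution with initial measure `ϑ`: a family
`ζ(t) = (ζ_1(t),…,ζ_K(t))` of finite Borel measures on `[0,∞)²` with `ζ(0) = ϑ` satisfying
`ζ_k(t)(B) = ϑ_k(B_t) + λ_k ∫_0^t (δ⁺_{w(s)} × Γ_k)(B_{t−s}) ds` for every Borel
`B ⊆ [0,∞)²` and `t ≥ 0`, where `w` is the (unique) workload fluid model solution with
`w(0) = w_ϑ`. -/
def IsFluidSol {K : ℕ} (D : Data K) (ϑ : Fin K → MeasureTheory.Measure (ℝ × ℝ))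
    (ζ : ℝ → Fin K → MeasureTheory.Measure (ℝ × ℝ)) : Prop :=
  ∃ w : ℝ → ℝ, IsWorkloadSol D w ∧ w 0 = wMeas ϑ ∧
    (∀ t : ℝ, 0 ≤ t → ∀ k, IsFiniteMeasure (ζ t k) ∧ ζ t k Qᶜ = 0) ∧
    (∀ k, ζ 0 k = ϑ k) ∧
    (∀ k, ∀ B : Set (ℝ × ℝ), B ⊆ Q → MeasurableSet B → ∀ t : ℝ, 0 ≤ t →
      IntervalIntegrable (fun s => kern (D.Γ k) (w s) (shiftd B (t - s))) volume 0 t ∧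
      ζ t k B = ϑ k (shiftd B t) +
        ENNReal.ofReal (D.lam k * ∫ s in (0:ℝ)..t, kern (D.Γ k) (w s) (shiftd B (t - s))))

/-- The candidate invariant state `θ^w`:
`θ^w_k(B) = λ_k ∫_0^w Γ_k({p ≥ u : (w−u, p−u) ∈ B}) du`. -/
def thetaW {K : ℕ} (D : Data K) (w : ℝ) (k : Fin K) : MeasureTheory.Measure (ℝ × ℝ) :=
  ENNReal.ofReal (D.lam k) •
    MeasureTheory.Measure.map (fun up : ℝ × ℝ => (w - up.1, up.2 - up.1))
      ((((MeasureTheory.volume.restrict (Set.Ioo (0:ℝ) w))).prod (D.Γ k)).restrict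
        {up : ℝ × ℝ | up.1 ≤ up.2})


section AuxLemmas

lemma Gk_nonneg (Γ : MeasureTheory.Measure ℝ) (x : ℝ) : 0 ≤ Gk Γ x :=
  ENNReal.toReal_nonneg

lemma Gk_anti (Γ : MeasureTheory.Measure ℝ) [IsFiniteMeasure Γ] : Antitone (Gk Γ) :=
  fun x y hxy =>
    ENNReal.toReal_mono (measure_ne_top _ _) (measure_mono (Set.Ioi_subset_Ioi hxy))

lemma aux_Ioi_zero (Γ : MeasureTheory.Measure ℝ) (a : ℝ)
    (h : ∀ x : ℝ, a < x → Γ (Set.Ioi x) = 0) : Γ (Set.Ioi a) = 0 := by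
  have hsub : Set.Ioi a ⊆ ⋃ n : ℕ, Set.Ioi (a + 1 / ((n : ℝ) + 1)) := by
    intro x hx
    obtain ⟨n, hn⟩ := exists_nat_one_div_lt (sub_pos.2 (Set.mem_Ioi.1 hx))
    exact Set.mem_iUnion.2 ⟨n, by simp only [Set.mem_Ioi]; linarith⟩
  have hz : ∀ n : ℕ, Γ (Set.Ioi (a + 1 / ((n : ℝ) + 1))) = 0 := fun n =>
    h _ (lt_add_of_pos_right a (by positivity))
  refine le_antisymm ?_ zero_le
  calc Γ (Set.Ioi a) ≤ ∑' n : ℕ, Γ (Set.Ioi (a + 1 / ((n : ℝ) + 1))) :=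
        (measure_mono hsub).trans (measure_iUnion_le _)
    _ = 0 := by rw [tsum_congr hz, tsum_zero]

end AuxLemmas

/-- If `w` is a workload fluid model solution with `w(0) ≤ d_max`, then
`w(s) < d_max` for every `s > 0`, and `s ↦ w(s) + s` is continuous and strictly increasing
on `[0,∞)`. -/
theorem workload_below_dmax {K : ℕ} (D : Data K) (w : ℝ → ℝ)
    (hw : IsWorkloadSol D w) (h0 : ENNReal.ofReal (w 0) ≤ dmax D) :
    (∀ s : ℝ, 0 < s → ENNReal.ofReal (w s) < dmax D) ∧
    ContinuousOn (fun s => w s + s) (Set.Ici (0:ℝ)) ∧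
    StrictMonoOn (fun s => w s + s) (Set.Ici (0:ℝ)) := by
  obtain ⟨hw0, hInt, hEq⟩ := hw
  have hrho : ∀ k : Fin K, 0 < D.rho k := fun k => div_pos (D.lam_pos k) (D.mu_pos k)
  -- integrability on subintervals
  have hIntSub : ∀ (k : Fin K) (u t : ℝ), 0 ≤ u → u ≤ t →
      IntervalIntegrable (fun s => Gk (D.Γ k) (w s)) volume u t := by
    intro k u t hu hut
    refine (hInt k t (hu.trans hut)).mono_set ?_
    rw [Set.uIcc_of_le hut, Set.uIcc_of_le (hu.trans hut)]
    exact Set.Icc_subset_Icc hu le_rfl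
  -- increment identity
  have hIncr : ∀ u t : ℝ, 0 ≤ u → u ≤ t →
      w t + t = (w u + u) + ∑ k, D.rho k * ∫ s in u..t, Gk (D.Γ k) (w s) := by
    intro u t hu hut
    have ht : (0:ℝ) ≤ t := hu.trans hut
    have hsplit : ∀ k : Fin K, (∫ s in (0:ℝ)..t, Gk (D.Γ k) (w s)) =
        (∫ s in (0:ℝ)..u, Gk (D.Γ k) (w s)) + ∫ s in u..t, Gk (D.Γ k) (w s) :=
      fun k => (intervalIntegral.integral_add_adjacent_intervals
        (hIntSub k 0 u le_rfl hu) (hIntSub k u t hu hut)).symm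
    rw [hEq t ht, hEq u hu]
    simp only [hsplit, mul_add, Finset.sum_add_distrib]
    ring
  have hIntNN : ∀ (k : Fin K) (u t : ℝ), u ≤ t →
      0 ≤ ∫ s in u..t, Gk (D.Γ k) (w s) := fun k u t hut =>
    intervalIntegral.integral_nonneg hut (fun s _ => Gk_nonneg _ _)
  -- continuity
  have hfc : ContinuousOn (fun s => w s + s) (Set.Ici (0:ℝ)) := by
    intro t ht
    have ht0 : (0:ℝ) ≤ t := ht
    have hT : (0:ℝ) ≤ t + 1 := by linarith
    have hci : ContinuousOn
        (fun r => w 0 + ∑ k, D.rho k * ∫ s in Set.Ioc (0:ℝ) r, Gk (D.Γ k) (w s))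
        (Set.Icc 0 (t+1)) := by
      refine continuousOn_const.add (continuousOn_finset_sum _ (fun k _ => ?_))
      exact continuousOn_const.mul (intervalIntegral.continuousOn_primitive
        ((integrableOn_Icc_iff_integrableOn_Ioc).2 (hInt k (t+1) hT).1))
    have heq : Set.EqOn (fun s => w s + s)
        (fun r => w 0 + ∑ k, D.rho k * ∫ s in Set.Ioc (0:ℝ) r, Gk (D.Γ k) (w s))
        (Set.Icc 0 (t+1)) := by
      intro r hr
      have := hEq r hr.1
      simp only
      rw [this]
      simp only [intervalIntegral.integral_of_le hr.1]
      ring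
    have h2 : ContinuousWithinAt (fun s => w s + s) (Set.Icc 0 (t+1)) t :=
      (hci.congr heq) t ⟨ht0, by linarith⟩
    exact h2.mono_of_mem_nhdsWithin (mem_nhdsWithin.2 ⟨Set.Iio (t+1), isOpen_Iio, lt_add_one t,
      fun x hx => ⟨hx.2, hx.1.le⟩⟩)
  have hwc : ContinuousOn w (Set.Ici (0:ℝ)) := by
    have := hfc.sub continuous_id.continuousOn
    exact this.congr (fun x _ => by simp)
  -- Part 1
  have hlt : ∀ s : ℝ, 0 < s → ENNReal.ofReal (w s) < dmax D := by
    by_cases htop : dmax D = ⊤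
    · intro s _; rw [htop]; exact ENNReal.ofReal_lt_top
    · set d := (dmax D).toReal with hdd
      have hdmax : dmax D = ENNReal.ofReal d := (ENNReal.ofReal_toReal htop).symm
      have hdnn : (0:ℝ) ≤ d := ENNReal.toReal_nonneg
      have hGd : ∀ (k : Fin K) (x : ℝ), d < x → D.Γ k (Set.Ioi x) = 0 := by
        intro k x hx
        by_contra hne
        have hgt : 0 < Gk (D.Γ k) x := ENNReal.toReal_pos hne (measure_ne_top _ _)
        have hxnn : 0 ≤ x := hdnn.trans hx.le
        have hmem : ENNReal.ofReal x ∈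
            ENNReal.ofReal '' {y : ℝ | 0 ≤ y ∧ 0 < Gk (D.Γ k) y} := ⟨x, ⟨hxnn, hgt⟩, rfl⟩
        have hle : ENNReal.ofReal x ≤ dmax D := by
          refine le_trans (le_sSup hmem) ?_
          unfold dmax
          exact le_iSup (fun j : Fin K => sSup (ENNReal.ofReal '' {y : ℝ | 0 ≤ y ∧ 0 < Gk (D.Γ j) y})) k
        rw [hdmax] at hle
        have := (ENNReal.ofReal_le_ofReal_iff hdnn).mp hle
        linarith
      have hKpos : 0 < K := by
        by_contra hK
        push_neg at hK
        have hK0 : K = 0 := Nat.le_zero.mp hK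
        have h1 := D.rho_gt_one
        have h2 : ∑ k, D.lam k / D.mu k = 0 :=
          Finset.sum_eq_zero (fun k _ => absurd k.2 (by omega))
        rw [h2] at h1
        norm_num at h1
      have hd0 : 0 < d := by
        rcases lt_or_ge 0 d with h | h
        · exact h
        · exfalso
          set k0 : Fin K := ⟨0, hKpos⟩
          have hz : D.Γ k0 (Set.Ioi (0:ℝ)) = 0 :=
            aux_Ioi_zero _ _ (fun x hx => hGd k0 x (lt_of_le_of_lt h hx))
          have hone : (1:ℝ≥0∞) ≤ D.Γ k0 (Set.Ioi (0:ℝ)) := by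
            have hsub : (Set.univ : Set ℝ) ⊆ Set.Iio 0 ∪ ({0} ∪ Set.Ioi 0) := by
              intro x _
              rcases lt_trichotomy x 0 with h' | h' | h'
              · exact Or.inl h'
              · exact Or.inr (Or.inl h')
              · exact Or.inr (Or.inr h')
            calc (1:ℝ≥0∞) = D.Γ k0 Set.univ := measure_univ.symm
              _ ≤ D.Γ k0 (Set.Iio 0) + (D.Γ k0 {0} + D.Γ k0 (Set.Ioi 0)) :=
                (measure_mono hsub).trans ((measure_union_le _ _).trans
                  (add_le_add le_rfl (measure_union_le _ _)))
              _ = D.Γ k0 (Set.Ioi 0) := by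
                rw [D.Γ_null_neg k0, D.Γ_noAtom k0 0]; simp
          rw [hz] at hone
          simp at hone
      have hIci : ∀ k : Fin K, D.Γ k (Set.Ici d) = 0 := by
        intro k
        have hIoi : D.Γ k (Set.Ioi d) = 0 := aux_Ioi_zero _ _ (hGd k)
        have hsub : Set.Ici d ⊆ {d} ∪ Set.Ioi d := by
          intro x hx
          rcases eq_or_lt_of_le (Set.mem_Ici.1 hx) with h' | h'
          · exact Or.inl h'.symm
          · exact Or.inr h'
        refine le_antisymm ?_ zero_le
        calc D.Γ k (Set.Ici d) ≤ D.Γ k {d} + D.Γ k (Set.Ioi d) :=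
              (measure_mono hsub).trans (measure_union_le _ _)
          _ = 0 := by rw [D.Γ_noAtom k d, hIoi]; simp
      -- choose c0 < d with small tail sum
      have htend : ∀ k : Fin K, Filter.Tendsto
          (fun n : ℕ => Gk (D.Γ k) (d - d / ((n:ℝ) + 2))) Filter.atTop (𝓝 0) := by
        intro k
        have hanti : Antitone (fun n : ℕ => Set.Ioi (d - d / ((n:ℝ) + 2))) := by
          intro n m hnm
          apply Set.Ioi_subset_Ioi
          have h1 : d / ((m:ℝ) + 2) ≤ d / ((n:ℝ) + 2) := by
            apply div_le_div_of_nonneg_left hd0.le (by positivity)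
            have : (n:ℝ) ≤ (m:ℝ) := Nat.cast_le.2 hnm
            linarith
          linarith
        have hint : (⋂ n : ℕ, Set.Ioi (d - d / ((n:ℝ) + 2))) = Set.Ici d := by
          ext x
          simp only [Set.mem_iInter, Set.mem_Ioi, Set.mem_Ici]
          constructor
          · intro h
            by_contra hx
            push_neg at hx
            obtain ⟨n, hn⟩ := exists_nat_one_div_lt (div_pos (sub_pos.2 hx) hd0)
            have h2 := h n
            have h5 : 1 * d < (d - x) * ((n:ℝ) + 1) :=
              (div_lt_div_iff₀ (by positivity) hd0).mp hn
            have h6 : d / ((n:ℝ) + 2) < d - x := by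
              rw [div_lt_iff₀ (by positivity)]
              nlinarith [sub_pos.2 hx]
            linarith
          · intro h n
            have : 0 < d / ((n:ℝ) + 2) := by positivity
            linarith
        have hm := MeasureTheory.tendsto_measure_iInter_atTop
          (μ := D.Γ k) (s := fun n : ℕ => Set.Ioi (d - d / ((n:ℝ) + 2)))
          (fun n => measurableSet_Ioi.nullMeasurableSet) hanti ⟨0, measure_ne_top _ _⟩
        rw [hint, hIci k] at hm
        have := (ENNReal.tendsto_toReal (by simp)).comp hm
        simpa [Gk, Function.comp_def] using this
      have hsum : Filter.Tendsto
          (fun n : ℕ => ∑ k, D.rho k * Gk (D.Γ k) (d - d / ((n:ℝ) + 2)))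
          Filter.atTop (𝓝 0) := by
        have := tendsto_finset_sum (f := fun (k : Fin K) (n : ℕ) =>
            D.rho k * Gk (D.Γ k) (d - d / ((n:ℝ) + 2)))
          (a := fun k : Fin K => D.rho k * 0) Finset.univ
          (fun k _ => ((htend k).const_mul _))
        simpa using this
      obtain ⟨n0, hS⟩ := (hsum.eventually_lt_const (by norm_num : (0:ℝ) < 1)).exists
      set c0 : ℝ := d - d / ((n0:ℝ) + 2) with hc0def
      have hc0lt : c0 < d := by
        have : 0 < d / ((n0:ℝ) + 2) := by positivity
        simp only [hc0def]
        linarith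
      -- key decrease estimate
      have hkey : ∀ u t : ℝ, 0 ≤ u → u ≤ t → (∀ s ∈ Set.Ioc u t, c0 ≤ w s) →
          w t ≤ w u - (1 - ∑ k, D.rho k * Gk (D.Γ k) c0) * (t - u) := by
        intro u t hu hut hws
        have hIncr' := hIncr u t hu hut
        have hbd : ∀ k : Fin K, (∫ s in u..t, Gk (D.Γ k) (w s)) ≤ Gk (D.Γ k) c0 * (t - u) := by
          intro k
          rw [intervalIntegral.integral_of_le hut]
          calc (∫ s in Set.Ioc u t, Gk (D.Γ k) (w s))
              ≤ ∫ _s in Set.Ioc u t, Gk (D.Γ k) c0 :=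
                MeasureTheory.setIntegral_mono_on (hIntSub k u t hu hut).1
                  (integrableOn_const measure_Ioc_lt_top.ne) measurableSet_Ioc
                  (fun s hs => Gk_anti (D.Γ k) (hws s hs))
            _ = Gk (D.Γ k) c0 * (t - u) := by
                rw [MeasureTheory.setIntegral_const]
                simp [Real.volume_Ioc, ENNReal.toReal_ofReal (sub_nonneg.2 hut), mul_comm, hut]
        have hsb : (∑ k, D.rho k * ∫ s in u..t, Gk (D.Γ k) (w s))
            ≤ (∑ k, D.rho k * Gk (D.Γ k) c0) * (t - u) := by
          rw [Finset.sum_mul]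
          refine Finset.sum_le_sum (fun k _ => ?_)
          rw [mul_assoc]
          exact mul_le_mul_of_nonneg_left (hbd k) (hrho k).le
        linarith
      -- w stays below d
      have hmain : ∀ t : ℝ, 0 < t → w t < d := by
        intro t ht
        have hw0d : w 0 ≤ d := by
          rw [hdmax] at h0
          exact (ENNReal.ofReal_le_ofReal_iff hdnn).mp h0
        by_contra hcon
        push_neg at hcon
        have hε : 0 < 1 - ∑ k, D.rho k * Gk (D.Γ k) c0 := by linarith
        by_cases hA : ∃ r ∈ Set.Icc (0:ℝ) t, w r ≤ c0
        · obtain ⟨r0, hr0, hr0'⟩ := hA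
          set A : Set ℝ := Set.Icc (0:ℝ) t ∩ w ⁻¹' Set.Iic c0 with hAdef
          have hAclosed : IsClosed A :=
            ContinuousOn.preimage_isClosed_of_isClosed
              (hwc.mono (fun x hx => hx.1)) isClosed_Icc isClosed_Iic
          have hAcomp : IsCompact A :=
            IsCompact.of_isClosed_subset isCompact_Icc hAclosed Set.inter_subset_left
          have hAne : A.Nonempty := ⟨r0, hr0, hr0'⟩
          have huA : sSup A ∈ A := hAcomp.sSup_mem hAne
          set u := sSup A with hudef
          have hu0 : 0 ≤ u := huA.1.1
          have hut : u ≤ t := huA.1.2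
          have huc : w u ≤ c0 := huA.2
          have hws : ∀ s ∈ Set.Ioc u t, c0 ≤ w s := by
            intro s hs
            by_contra hsc
            push_neg at hsc
            have hsA : s ∈ A := ⟨⟨hu0.trans hs.1.le, hs.2⟩, hsc.le⟩
            have : s ≤ u := le_csSup hAcomp.bddAbove hsA
            linarith [hs.1]
          have hkt := hkey u t hu0 hut hws
          have : 0 ≤ (1 - ∑ k, D.rho k * Gk (D.Γ k) c0) * (t - u) :=
            mul_nonneg hε.le (by linarith)
          linarith
        · push_neg at hA
          have hws : ∀ s ∈ Set.Ioc (0:ℝ) t, c0 ≤ w s :=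
            fun s hs => (hA s ⟨hs.1.le, hs.2⟩).le
          have hkt := hkey 0 t le_rfl ht.le hws
          have : 0 < (1 - ∑ k, D.rho k * Gk (D.Γ k) c0) * (t - 0) :=
            mul_pos hε (by linarith)
          linarith
      intro s hs
      rw [hdmax, ENNReal.ofReal_lt_ofReal_iff hd0]
      exact hmain s hs
  -- Part 3: strict monotonicity
  have hsm : StrictMonoOn (fun s => w s + s) (Set.Ici (0:ℝ)) := by
    intro u hu t ht hut
    have hu0 : (0:ℝ) ≤ u := hu
    set s0 : ℝ := (u + t) / 2 with hs0def
    have hs0pos : 0 < s0 := by simp only [hs0def]; linarith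
    have hus0 : u < s0 := by simp only [hs0def]; linarith
    have hs0t : s0 < t := by simp only [hs0def]; linarith
    obtain ⟨k, x, hxG, hwx⟩ : ∃ (k : Fin K) (x : ℝ), 0 < Gk (D.Γ k) x ∧ w s0 < x := by
      have h1 := hlt s0 hs0pos
      rw [dmax, lt_iSup_iff] at h1
      obtain ⟨k, hk⟩ := h1
      rw [lt_sSup_iff] at hk
      obtain ⟨b, hb, hbgt⟩ := hk
      obtain ⟨x, ⟨hx0, hxG⟩, rfl⟩ := hb
      refine ⟨k, x, hxG, ?_⟩
      by_contra hle
      push_neg at hle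
      exact absurd hbgt (not_lt.2 (ENNReal.ofReal_le_ofReal hle))
    have hcont : ContinuousAt w s0 := hwc.continuousAt (Ici_mem_nhds hs0pos)
    obtain ⟨δ, hδ, hball⟩ := Metric.mem_nhds_iff.mp (hcont (Iio_mem_nhds hwx))
    set δ' : ℝ := min (δ / 2) ((t - u) / 4) with hδ'def
    have hδ' : 0 < δ' := lt_min (by linarith) (by linarith)
    set a : ℝ := s0 - δ' with hadef
    set b : ℝ := s0 + δ' with hbdef
    have hd1 : δ' ≤ δ / 2 := min_le_left _ _
    have hd2 : δ' ≤ (t - u) / 4 := min_le_right _ _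
    have hua : u < a := by simp only [hadef, hs0def]; linarith
    have hbt : b < t := by simp only [hbdef, hs0def]; linarith
    have hab : a ≤ b := by simp only [hadef, hbdef]; linarith
    have ha0 : 0 ≤ a := by linarith
    have hwlt : ∀ s ∈ Set.Icc a b, w s < x := by
      intro s hs
      have : s ∈ Metric.ball s0 δ := by
        rw [Metric.mem_ball, Real.dist_eq, abs_sub_lt_iff]
        constructor
        · have := hs.2; simp only [hbdef] at this; linarith
        · have := hs.1; simp only [hadef] at this; linarith
      exact hball this
    have habpos : 0 < (∫ s in a..b, Gk (D.Γ k) (w s)) := by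
      have hmono : (b - a) * Gk (D.Γ k) x ≤ ∫ s in a..b, Gk (D.Γ k) (w s) := by
        rw [intervalIntegral.integral_of_le hab]
        calc (b - a) * Gk (D.Γ k) x
            = ∫ _s in Set.Ioc a b, Gk (D.Γ k) x := by
              rw [MeasureTheory.setIntegral_const]
              simp [Real.volume_Ioc, ENNReal.toReal_ofReal (sub_nonneg.2 hab), mul_comm, hab]
          _ ≤ ∫ s in Set.Ioc a b, Gk (D.Γ k) (w s) :=
              MeasureTheory.setIntegral_mono_on
                (integrableOn_const measure_Ioc_lt_top.ne)
                (hIntSub k a b ha0 hab).1 measurableSet_Ioc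
                (fun s hs => Gk_anti (D.Γ k) (hwlt s ⟨hs.1.le, hs.2⟩).le)
      have : 0 < (b - a) * Gk (D.Γ k) x := by
        apply mul_pos _ hxG
        simp only [hbdef, hadef]
        linarith
      linarith
    have hpos : 0 < (∫ s in u..t, Gk (D.Γ k) (w s)) := by
      have h1 : (∫ s in u..t, Gk (D.Γ k) (w s)) =
          (∫ s in u..a, Gk (D.Γ k) (w s)) + ((∫ s in a..b, Gk (D.Γ k) (w s))
            + (∫ s in b..t, Gk (D.Γ k) (w s))) := by
        rw [intervalIntegral.integral_add_adjacent_intervals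
          (hIntSub k a b ha0 hab) (hIntSub k b t (by linarith) hbt.le)]
        rw [intervalIntegral.integral_add_adjacent_intervals
          (hIntSub k u a hu0 hua.le) (hIntSub k a t ha0 (by linarith))]
      rw [h1]
      have h2 := hIntNN k u a hua.le
      have h3 := hIntNN k b t hbt.le
      linarith
    have hterm : 0 < D.rho k * ∫ s in u..t, Gk (D.Γ k) (w s) := mul_pos (hrho k) hpos
    have hsumpos : 0 < ∑ j, D.rho j * ∫ s in u..t, Gk (D.Γ j) (w s) :=
      lt_of_lt_of_le hterm (Finset.single_le_sum
        (fun j _ => mul_nonneg (hrho j).le (hIntNN j u t hut.le)) (Finset.mem_univ k))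
    have := hIncr u t hu0 hut.le
    simp only
    linarith
  exact ⟨hlt, hfc, hsm⟩


end OverloadedFIFO
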